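/- For a single-layer linear attention model f(Z) = h^T (Z W_q W_k^T Z^T M Z W_v)_{n+1} applied to the prompt Z = [X, y; x^T, 0] ∈ R^{(n+1)×(d+1)} with mask M = diag(I_n, 0), the prediction can be written as f(Z) = x^T W̃ X^T y + x^T(W̄ X^T X h₁ + h (y^T y) w₁), where W̄, w₁, w₂, w are the blocks of W_q W_k^T, (h₁, h) the blocks of W_v h, and W̃ = h W̄ + w₁ h₁^T. In particular, every such prediction with h₁ = w₁ = 0 equals x^T W̃ X^T y, and conversely every map of the form x^T W X^T y (W ∈ R^{d×d}) is realizable. -/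
import Mathlib


open Matrix

/-- The prediction of a single-layer linear attention model
`f(Z) = hᵀ (Z W_qW_kᵀ Zᵀ M Z W_v)_{n+1}` on the prompt
`Z = [X, y; xᵀ, 0]` with mask `M = diag(I_n, 0)`, parameterized directly by the
blocks `W̄, w₁, w₂, w` of `W_qW_kᵀ` and the blocks `(h₁, h)` of `W_v h`. -/
noncomputable def attnPred (n d : ℕ) (X : Matrix (Fin n) (Fin d) ℝ)
    (y : Fin n → ℝ) (x : Fin d → ℝ) (Wb : Matrix (Fin d) (Fin d) ℝ)
    (w1 w2 : Fin d → ℝ) (w : ℝ) (h1 : Fin d → ℝ) (hs : ℝ) : ℝ :=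
  let Z : Matrix (Fin n ⊕ Unit) (Fin d ⊕ Unit) ℝ :=
    Matrix.fromBlocks X (Matrix.of fun i _ => y i) (Matrix.of fun _ j => x j) 0
  let WQK : Matrix (Fin d ⊕ Unit) (Fin d ⊕ Unit) ℝ :=
    Matrix.fromBlocks Wb (Matrix.of fun i _ => w1 i) (Matrix.of fun _ j => w2 j)
      (Matrix.of fun _ _ => w)
  let M : Matrix (Fin n ⊕ Unit) (Fin n ⊕ Unit) ℝ := Matrix.fromBlocks 1 0 0 0
  ((Z * WQK * Zᵀ * M * Z).mulVec (Sum.elim h1 fun _ => hs)) (Sum.inr ())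

/-- Single-layer linear attention: the prediction equals
`xᵀ W̃ Xᵀ y + xᵀ(W̄ XᵀX h₁ + h (yᵀy) w₁)` where `W̃ = h W̄ + w₁ h₁ᵀ`; in
particular with `h₁ = w₁ = 0` it is `xᵀ W̃ Xᵀ y`, and conversely every map
`x ↦ xᵀ W Xᵀ y` is realizable. -/
lemma key (n d : ℕ) (X : Matrix (Fin n) (Fin d) ℝ)
    (y : Fin n → ℝ) (x : Fin d → ℝ) (Wb : Matrix (Fin d) (Fin d) ℝ)
    (w1 w2 : Fin d → ℝ) (w : ℝ) (h1 : Fin d → ℝ) (hs : ℝ) :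
    attnPred n d X y x Wb w1 w2 w h1 hs
      = x ⬝ᵥ (Wb.mulVec (Xᵀ.mulVec (X.mulVec h1 + hs • y))
          + (y ⬝ᵥ (X.mulVec h1 + hs • y)) • w1) := by
  unfold attnPred
  dsimp only
  rw [← Matrix.mulVec_mulVec, ← Matrix.mulVec_mulVec, ← Matrix.mulVec_mulVec,
    ← Matrix.mulVec_mulVec]
  simp [Matrix.fromBlocks_mulVec, Matrix.fromBlocks_transpose, Matrix.mulVec,
    dotProduct, Finset.mul_sum, Finset.sum_mul, mul_comm, mul_left_comm, Matrix.one_apply, Matrix.mul_apply, mul_ite, ite_mul, mul_zero, zero_mul, mul_one, Finset.sum_ite_eq, Finset.sum_ite_eq']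
  refine Finset.sum_congr rfl fun s _ => ?_
  congr 1
  congr 1
  rw [Finset.sum_comm]
  exact Finset.sum_congr rfl fun i _ => Finset.sum_congr rfl fun t _ => by ring

lemma part1 (n d : ℕ) (X : Matrix (Fin n) (Fin d) ℝ) (y : Fin n → ℝ) (x : Fin d → ℝ)
    (Wb : Matrix (Fin d) (Fin d) ℝ) (w1 w2 : Fin d → ℝ) (w : ℝ)
    (h1 : Fin d → ℝ) (hs : ℝ) :
      attnPred n d X y x Wb w1 w2 w h1 hs
        = x ⬝ᵥ (hs • Wb + Matrix.vecMulVec w1 h1).mulVec (Xᵀ.mulVec y)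
          + x ⬝ᵥ ((Wb * (Xᵀ * X)).mulVec h1 + (hs * (y ⬝ᵥ y)) • w1) := by
  rw [key]
  simp [Matrix.mulVec_add, Matrix.mulVec_smul, dotProduct_add,
    Matrix.add_mulVec, Matrix.smul_mulVec, ← Matrix.mulVec_mulVec,
    Matrix.vecMulVec_apply, Matrix.mulVec, dotProduct, dotProduct_smul, smul_smul, dotProduct_add,
    smul_dotProduct, dotProduct_mulVec, Matrix.vecMul_transpose, smul_eq_mul]
  rw [← Finset.sum_add_distrib]
  refine Finset.sum_congr rfl fun s _ => ?_
  have h : (∑ i, y i * ((∑ t, X i t * h1 t) + hs * y i))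
      = (∑ t, h1 t * ∑ i, X i t * y i) + hs * ∑ i, y i * y i := by
    simp only [mul_add, Finset.sum_add_distrib]
    congr 1
    · simp only [Finset.mul_sum]
      rw [Finset.sum_comm]
      exact Finset.sum_congr rfl fun t _ => Finset.sum_congr rfl fun i _ => by ring
    · rw [Finset.mul_sum]
      exact Finset.sum_congr rfl fun i _ => by ring
  have h2 : (∑ t, (hs * Wb s t + w1 s * h1 t) * (∑ i, X i t * y i))
      = hs * (∑ t, Wb s t * ∑ i, X i t * y i)
        + w1 s * ∑ t, h1 t * ∑ i, X i t * y i := by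
    rw [Finset.mul_sum, Finset.mul_sum, ← Finset.sum_add_distrib]
    exact Finset.sum_congr rfl fun t _ => by ring
  rw [h, h2]
  ring

theorem stmt19 (n d : ℕ) :
    (∀ (X : Matrix (Fin n) (Fin d) ℝ) (y : Fin n → ℝ) (x : Fin d → ℝ)
        (Wb : Matrix (Fin d) (Fin d) ℝ) (w1 w2 : Fin d → ℝ) (w : ℝ)
        (h1 : Fin d → ℝ) (hs : ℝ),
      attnPred n d X y x Wb w1 w2 w h1 hs
        = x ⬝ᵥ (hs • Wb + Matrix.vecMulVec w1 h1).mulVec (Xᵀ.mulVec y)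
          + x ⬝ᵥ ((Wb * (Xᵀ * X)).mulVec h1 + (hs * (y ⬝ᵥ y)) • w1)) ∧
    (∀ (X : Matrix (Fin n) (Fin d) ℝ) (y : Fin n → ℝ) (x : Fin d → ℝ)
        (Wb : Matrix (Fin d) (Fin d) ℝ) (w2 : Fin d → ℝ) (w : ℝ) (hs : ℝ),
      attnPred n d X y x Wb 0 w2 w 0 hs
        = x ⬝ᵥ (hs • Wb).mulVec (Xᵀ.mulVec y)) ∧
    (∀ W : Matrix (Fin d) (Fin d) ℝ,
      ∃ (Wb : Matrix (Fin d) (Fin d) ℝ) (w1 w2 : Fin d → ℝ) (w : ℝ)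
        (h1 : Fin d → ℝ) (hs : ℝ),
        ∀ (X : Matrix (Fin n) (Fin d) ℝ) (y : Fin n → ℝ) (x : Fin d → ℝ),
          attnPred n d X y x Wb w1 w2 w h1 hs = x ⬝ᵥ W.mulVec (Xᵀ.mulVec y)) := by
  refine ⟨fun X y x Wb w1 w2 w h1 hs => part1 n d X y x Wb w1 w2 w h1 hs, ?_, ?_⟩
  · intro X y x Wb w2 w hs
    rw [part1]
    simp [Matrix.vecMulVec, show (Matrix.of fun (_ _ : Fin d) => (0:ℝ)) = 0 from rfl]
  · intro W
    refine ⟨W, 0, 0, 0, 0, 1, fun X y x => ?_⟩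
    rw [part1]
    simp [Matrix.vecMulVec, show (Matrix.of fun (_ _ : Fin d) => (0:ℝ)) = 0 from rfl]
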